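/- arXiv:2605.28677 — 3 statements merged into one kernel-verified Lean document; each statement's English description precedes it below -/
import Mathlib

section
/- Let Γ be the algebra endomorphism of the formal power series ring ℝ[[z_k, z_n]] determined by Γz_k = z_k, Γz_n = z_n + π^{(n)}, Γ1 = 1, and multiplicativity, where (π^{(n)})_n ⊂ ℝ[[z_k,z_n]] satisfies: π^{(n)}_β ≠ 0 ⟹ |n| < |β|. Then Γ is well-defined on ℝ[[z_k,z_n]] (for every β, the coefficient (Γπ)_β involves only finitely many γ with Γ_β^γ ≠ 0), and Γ is strictly triangular with respect to homogeneity: (Γ − id)_β^γ ≠ 0 implies |γ| < |β|. -/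
/-- Polynomial multiindices `n ∈ ℕ^{1+d}`. -/
abbrev PIdx (d : ℕ) := Fin (d + 1) →₀ ℕ

/-- Multiindices `β` over the variables `z_k` (`k : ℕ`, left summand) and `z_n`
(`n ∈ ℕ^{1+d}`, right summand), indexing the monomials `z^β` of `ℝ[[z_k, z_n]]`. -/
abbrev MIdx (d : ℕ) := (ℕ ⊕ PIdx d) →₀ ℕ

/-- Parabolic degree `|n| = 2 n₀ + n₁ + ⋯ + n_d`. -/
def pDeg {d : ℕ} (n : PIdx d) : ℕ := n 0 + n.sum fun _ v => v

/-- `Σ_k β(k)`. -/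
def kSum {d : ℕ} (β : MIdx d) : ℕ :=
  β.sum fun j m => match j with
    | Sum.inl _ => m
    | Sum.inr _ => 0

/-- `Σ_n β(n)`. -/
def nSum {d : ℕ} (β : MIdx d) : ℕ :=
  β.sum fun j m => match j with
    | Sum.inl _ => 0
    | Sum.inr _ => m

/-- `Σ_n |n| β(n)`. -/
def npSum {d : ℕ} (β : MIdx d) : ℕ :=
  β.sum fun j m => match j with
    | Sum.inl _ => 0
    | Sum.inr n => pDeg n * m

/-- The bracket `[β] = Σ_k (k−1) β(k) − Σ_n β(n)`. -/
def brk {d : ℕ} (β : MIdx d) : ℤ :=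
  β.sum fun j m => match j with
    | Sum.inl k => ((k : ℤ) - 1) * (m : ℤ)
    | Sum.inr _ => -(m : ℤ)

/-- Homogeneity `|β| = α(1 + (k̲−1) Σ_k β(k) − Σ_n β(n)) + 2 Σ_k β(k) + Σ_n |n| β(n)`. -/
noncomputable def homog {d : ℕ} (α : ℝ) (kb : ℕ) (β : MIdx d) : ℝ :=
  α * (1 + ((kb : ℝ) - 1) * (kSum β : ℝ) - (nSum β : ℝ))
    + 2 * (kSum β : ℝ) + (npSum β : ℝ)

lemma kSum_add' {d : ℕ} (β γ : MIdx d) : kSum (β + γ) = kSum β + kSum γ := by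
  unfold kSum; apply Finsupp.sum_add_index' <;> intro j <;> cases j <;> simp
lemma nSum_add' {d : ℕ} (β γ : MIdx d) : nSum (β + γ) = nSum β + nSum γ := by
  unfold nSum; apply Finsupp.sum_add_index' <;> intro j <;> cases j <;> simp
lemma npSum_add' {d : ℕ} (β γ : MIdx d) : npSum (β + γ) = npSum β + npSum γ := by
  unfold npSum; apply Finsupp.sum_add_index' <;> intro j <;> cases j <;> simp [mul_add]

lemma homog_add' {d : ℕ} (α : ℝ) (kb : ℕ) (β γ : MIdx d) :
    homog α kb (β + γ) = homog α kb β + homog α kb γ - α := by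
  unfold homog; rw [kSum_add', nSum_add', npSum_add']; push_cast; ring

lemma homog_single_inr' {d : ℕ} (α : ℝ) (kb : ℕ) (n : PIdx d) :
    homog α kb (Finsupp.single (Sum.inr n) 1) = pDeg n := by
  have h1 : kSum (Finsupp.single (Sum.inr n : ℕ ⊕ PIdx d) 1) = 0 := by
    unfold kSum; rw [Finsupp.sum_single_index] <;> rfl
  have h2 : nSum (Finsupp.single (Sum.inr n : ℕ ⊕ PIdx d) 1) = 1 := by
    unfold nSum; rw [Finsupp.sum_single_index] <;> rfl
  have h3 : npSum (Finsupp.single (Sum.inr n : ℕ ⊕ PIdx d) 1) = pDeg n := by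
    unfold npSum; rw [Finsupp.sum_single_index]
    · exact mul_one _
    · rfl
  unfold homog; rw [h1, h2, h3]; push_cast; ring

section main
variable {d : ℕ} (α : ℝ) (kb : ℕ) (hα : α < 0) (ha : 0 < 2 + ((kb : ℝ) - 1) * α)
    (π : PIdx d → MIdx d → ℝ)
    (hπ : ∀ (n : PIdx d) (β : MIdx d), π n β ≠ 0 → (pDeg n : ℝ) < homog α kb β)
    (Γ : MIdx d → MIdx d → ℝ)
    (hΓk : ∀ (k : ℕ) (β : MIdx d),
      Γ β (Finsupp.single (Sum.inl k) 1) =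
        if β = Finsupp.single (Sum.inl k) 1 then 1 else 0)
    (hΓn : ∀ (n : PIdx d) (β : MIdx d),
      Γ β (Finsupp.single (Sum.inr n) 1) =
        (if β = Finsupp.single (Sum.inr n) 1 then 1 else 0) + π n β)
    (hΓ1 : ∀ β : MIdx d, Γ β 0 = if β = 0 then 1 else 0)
    (hΓmul : ∀ γ₁ γ₂ β : MIdx d,
      Γ β (γ₁ + γ₂) = ∑ p ∈ Finset.HasAntidiagonal.antidiagonal β, Γ p.1 γ₁ * Γ p.2 γ₂)

include hα ha hπ hΓk hΓn hΓ1 hΓmul in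
lemma gamma_main : ∀ (N : ℕ) (γ : MIdx d), (γ.sum fun _ m => m) ≤ N →
    ((∀ β, Γ β γ ≠ 0 →
        (∀ k, γ (Sum.inl k) ≤ β (Sum.inl k)) ∧ homog α kb γ ≤ homog α kb β ∧
        (γ ≠ β → homog α kb γ < homog α kb β)) ∧ Γ γ γ = 1) := by
  -- behavior on single generators
  have Hsingle : ∀ (j : ℕ ⊕ PIdx d) (p : MIdx d),
      Γ p (Finsupp.single j 1) ≠ 0 →
      (∀ k, (Finsupp.single j 1 : MIdx d) (Sum.inl k) ≤ p (Sum.inl k)) ∧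
      homog α kb (Finsupp.single j 1) ≤ homog α kb p ∧
      (p ≠ Finsupp.single j 1 → homog α kb (Finsupp.single j 1) < homog α kb p) := by
    intro j p hp
    cases j with
    | inl k =>
      rw [hΓk] at hp
      split at hp
      · next h =>
        subst h
        exact ⟨fun _ => le_rfl, le_rfl, fun h => absurd rfl h⟩
      · exact absurd rfl hp
    | inr n =>
      rw [hΓn] at hp
      have hsapp : ∀ k, (Finsupp.single (Sum.inr n : ℕ ⊕ PIdx d) 1) (Sum.inl k) = 0 := by
        intro k; rw [Finsupp.single_apply_eq_zero]; intro h; exact absurd h (by simp)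
      by_cases hps : p = Finsupp.single (Sum.inr n) 1
      · subst hps
        exact ⟨fun k => le_rfl, le_rfl, fun h => absurd rfl h⟩
      · rw [if_neg hps, zero_add] at hp
        have := hπ n p hp
        rw [← homog_single_inr' α kb n] at this
        exact ⟨fun k => (hsapp k) ▸ Nat.zero_le _, this.le, fun _ => this⟩
  have HsingleDiag : ∀ (j : ℕ ⊕ PIdx d),
      Γ (Finsupp.single j 1) (Finsupp.single j 1) = 1 := by
    intro j
    cases j with
    | inl k => rw [hΓk, if_pos rfl]
    | inr n =>
      rw [hΓn, if_pos rfl]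
      have : π n (Finsupp.single (Sum.inr n) 1) = 0 := by
        by_contra h
        have := hπ n _ h
        rw [homog_single_inr' α kb n] at this
        exact lt_irrefl _ this
      rw [this, add_zero]
  intro N
  induction N with
  | zero =>
    intro γ hdeg
    have hγ0 : γ = 0 := by
      ext j
      rw [Finsupp.coe_zero, Pi.zero_apply]
      by_contra hj
      have hjs : j ∈ γ.support := Finsupp.mem_support_iff.mpr hj
      have : γ j ≤ γ.sum fun _ m => m :=
        Finset.single_le_sum (f := fun j => γ j) (fun _ _ => Nat.zero_le _) hjs
      omega
    subst hγ0
    constructor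
    · intro β hβ
      rw [hΓ1] at hβ
      split at hβ
      · next h => subst h; exact ⟨fun _ => le_rfl, le_rfl, fun h => absurd rfl h⟩
      · exact absurd rfl hβ
    · rw [hΓ1, if_pos rfl]
  | succ N IH =>
    intro γ hdeg
    by_cases hγ0 : γ = 0
    · exact IH γ (by simp [hγ0])
    · obtain ⟨j, hj⟩ : ∃ j, γ j ≠ 0 := by
        by_contra h
        push_neg at h
        exact hγ0 (Finsupp.ext h)
      set s : MIdx d := Finsupp.single j 1 with hs
      have hle : s ≤ γ := Finsupp.single_le_iff.mpr (Nat.one_le_iff_ne_zero.mpr hj)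
      set γ' : MIdx d := γ - s with hγ'
      have hsum : s + γ' = γ := add_tsub_cancel_of_le hle
      have hdeg' : (γ'.sum fun _ m => m) ≤ N := by
        have h1 : (γ.sum fun _ m => m) = (s.sum fun _ m => m) + (γ'.sum fun _ m => m) := by
          rw [← hsum]
          exact Finsupp.sum_add_index' (fun _ => rfl) (fun _ _ _ => rfl)
        have h2 : (s.sum fun _ m => m) = 1 := by
          rw [hs, Finsupp.sum_single_index]; rfl
        omega
      obtain ⟨IH1, IH2⟩ := IH γ' hdeg'
      constructor
      · intro β hβ
        rw [← hsum, hΓmul] at hβ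
        obtain ⟨p, hpmem, hpne⟩ := Finset.exists_ne_zero_of_sum_ne_zero hβ
        have hp : p.1 + p.2 = β := Finset.HasAntidiagonal.mem_antidiagonal.mp hpmem
        have h1 : Γ p.1 s ≠ 0 := left_ne_zero_of_mul hpne
        have h2 : Γ p.2 γ' ≠ 0 := right_ne_zero_of_mul hpne
        obtain ⟨hs1, hs2, hs3⟩ := Hsingle j p.1 h1
        obtain ⟨hg1, hg2, hg3⟩ := IH1 p.2 h2
        have hγeq : homog α kb γ = homog α kb s + homog α kb γ' - α := by
          rw [← hsum, homog_add']
        have hβeq : homog α kb β = homog α kb p.1 + homog α kb p.2 - α := by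
          rw [← hp, homog_add']
        refine ⟨?_, by linarith, ?_⟩
        · intro k
          have : γ (Sum.inl k) = s (Sum.inl k) + γ' (Sum.inl k) := by
            rw [← hsum]; rfl
          have hb : β (Sum.inl k) = p.1 (Sum.inl k) + p.2 (Sum.inl k) := by
            rw [← hp]; rfl
          rw [this, hb]
          exact add_le_add (hs1 k) (hg1 k)
        · intro hne
          by_cases hps : p.1 = s
          · by_cases hpg : p.2 = γ'
            · exact absurd (by rw [← hp, hps, hpg, hsum]) (Ne.symm hne)
            · have := hg3 (fun h => hpg h.symm)
              have hseq : homog α kb p.1 = homog α kb s := by rw [hps]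
              linarith
          · have := hs3 hps
            linarith
      · rw [show Γ γ γ = Γ γ (s + γ') by rw [hsum], hΓmul]
        rw [Finset.sum_eq_single_of_mem (s, γ')
          (Finset.HasAntidiagonal.mem_antidiagonal.mpr hsum)]
        · rw [HsingleDiag j, IH2, one_mul]
        · intro p hpmem hpne
          by_contra hne0
          have hp : p.1 + p.2 = γ := Finset.HasAntidiagonal.mem_antidiagonal.mp hpmem
          have h1 : Γ p.1 s ≠ 0 := left_ne_zero_of_mul hne0
          have h2 : Γ p.2 γ' ≠ 0 := right_ne_zero_of_mul hne0
          by_cases hps : p.1 = s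
          · have hpg : p.2 = γ' := by
              have h' := hp
              rw [← hsum, hps] at h'
              exact add_left_cancel h'
            exact hpne (Prod.ext hps hpg)
          · obtain ⟨_, hs2, hs3⟩ := Hsingle j p.1 h1
            obtain ⟨_, hg2, _⟩ := IH1 p.2 h2
            have hstrict := hs3 hps
            have hγeq : homog α kb γ = homog α kb s + homog α kb γ' - α := by
              rw [← hsum, homog_add']
            have hpeq : homog α kb γ = homog α kb p.1 + homog α kb p.2 - α := by
              rw [← hp, homog_add']
            linarith
end main

theorem gamma_welldefined_triangular_aux {d : ℕ} (α : ℝ) (kb : ℕ) (hkb : 3 ≤ kb)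
    (hα : α < 0) (ha : 0 < 2 + ((kb : ℝ) - 1) * α)
    (π : PIdx d → MIdx d → ℝ)
    (hπ : ∀ (n : PIdx d) (β : MIdx d), π n β ≠ 0 → (pDeg n : ℝ) < homog α kb β)
    (Γ : MIdx d → MIdx d → ℝ)
    (hΓk : ∀ (k : ℕ) (β : MIdx d),
      Γ β (Finsupp.single (Sum.inl k) 1) =
        if β = Finsupp.single (Sum.inl k) 1 then 1 else 0)
    (hΓn : ∀ (n : PIdx d) (β : MIdx d),
      Γ β (Finsupp.single (Sum.inr n) 1) =
        (if β = Finsupp.single (Sum.inr n) 1 then 1 else 0) + π n β)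
    (hΓ1 : ∀ β : MIdx d, Γ β 0 = if β = 0 then 1 else 0)
    (hΓmul : ∀ γ₁ γ₂ β : MIdx d,
      Γ β (γ₁ + γ₂) = ∑ p ∈ Finset.HasAntidiagonal.antidiagonal β, Γ p.1 γ₁ * Γ p.2 γ₂)
    :
    (∀ β : MIdx d, {γ : MIdx d | Γ β γ ≠ 0}.Finite) ∧
    (∀ β γ : MIdx d, Γ β γ ≠ (if γ = β then 1 else 0) →
      homog α kb γ < homog α kb β) := by
  have main := gamma_main α kb hα ha π hπ Γ hΓk hΓn hΓ1 hΓmul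
  constructor
  · -- finiteness of each row
    intro β
    set C' : ℝ := homog α kb β - α with hC'
    set M : ℕ := ⌈C'⌉₊ + ⌈C' / (-α)⌉₊ with hM
    set ν : PIdx d := Finsupp.equivFunOnFinite.symm (fun _ => M) with hν
    set μ : PIdx d →₀ ℕ := Finsupp.indicator (Finset.Iic ν) (fun _ _ => M) with hμ
    set ub : MIdx d := β + Finsupp.embDomain ⟨Sum.inr, Sum.inr_injective⟩ μ with hub
    apply Set.Finite.subset (Set.finite_Iic ub)
    intro γ hγ
    obtain ⟨hk, hH, -⟩ := (main _ γ le_rfl).1 β hγ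
    -- key real bound
    have hw : (npSum γ : ℝ) - α * (nSum γ : ℝ) ≤ C' := by
      have hexp : homog α kb γ
          = α + (2 + ((kb : ℝ) - 1) * α) * (kSum γ : ℝ)
            + ((npSum γ : ℝ) - α * (nSum γ : ℝ)) := by
        unfold homog; ring
      have hks : (0 : ℝ) ≤ (kSum γ : ℝ) := Nat.cast_nonneg _
      nlinarith [hH, hexp]
    rw [Set.mem_Iic, Finsupp.le_def]
    intro j
    cases j with
    | inl k =>
      have h0 : Finsupp.embDomain ⟨Sum.inr, Sum.inr_injective⟩ μ (Sum.inl k) = 0 := by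
        apply Finsupp.embDomain_notin_range; simp
      calc γ (Sum.inl k) ≤ β (Sum.inl k) := hk k
        _ ≤ ub (Sum.inl k) := by rw [hub, Finsupp.add_apply, h0]; omega
    | inr n =>
      by_cases hz : γ (Sum.inr n) = 0
      · rw [hz]; exact Nat.zero_le _
      · have hmem : (Sum.inr n : ℕ ⊕ PIdx d) ∈ γ.support := Finsupp.mem_support_iff.mpr hz
        have hnp : pDeg n * γ (Sum.inr n) ≤ npSum γ := by
          unfold npSum Finsupp.sum
          exact Finset.single_le_sum
            (f := fun j => match j with
              | Sum.inl _ => 0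
              | Sum.inr n => pDeg n * γ j) (fun _ _ => Nat.zero_le _) hmem
        have hns : γ (Sum.inr n) ≤ nSum γ := by
          unfold nSum Finsupp.sum
          exact Finset.single_le_sum
            (f := fun j => match j with
              | Sum.inl _ => 0
              | Sum.inr _ => γ j) (fun _ _ => Nat.zero_le _) hmem
        have h1 : (1 : ℝ) ≤ (γ (Sum.inr n) : ℝ) := by
          exact_mod_cast Nat.one_le_iff_ne_zero.mpr hz
        have hnpR : (pDeg n : ℝ) * (γ (Sum.inr n) : ℝ) ≤ (npSum γ : ℝ) := by
          exact_mod_cast hnp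
        have hnsR : ((γ (Sum.inr n) : ℕ) : ℝ) ≤ (nSum γ : ℝ) := by exact_mod_cast hns
        have hnpnn : (0 : ℝ) ≤ (npSum γ : ℝ) := Nat.cast_nonneg _
        have hnsnn : (0 : ℝ) ≤ (nSum γ : ℝ) := Nat.cast_nonneg _
        have hpdnn : (0 : ℝ) ≤ (pDeg n : ℝ) := Nat.cast_nonneg _
        -- pDeg n ≤ C'
        have hpd : (pDeg n : ℝ) ≤ C' := by nlinarith
        -- γ (inr n) ≤ C' / (-α)
        have hgn : (γ (Sum.inr n) : ℝ) ≤ C' / (-α) := by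
          rw [le_div_iff₀ (by linarith : (0:ℝ) < -α)]
          nlinarith
        have hpdM : pDeg n ≤ M := by
          have : pDeg n ≤ ⌈C'⌉₊ := by
            rw [← Nat.ceil_natCast (R := ℝ) (pDeg n)]
            exact Nat.ceil_le_ceil hpd
          omega
        have hgnM : γ (Sum.inr n) ≤ M := by
          have : γ (Sum.inr n) ≤ ⌈C' / (-α)⌉₊ := by
            rw [← Nat.ceil_natCast (R := ℝ) (γ (Sum.inr n))]
            exact Nat.ceil_le_ceil hgn
          omega
        have hnν : n ∈ Finset.Iic ν := by
          rw [Finset.mem_Iic, Finsupp.le_def]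
          intro i
          have hni : n i ≤ pDeg n := by
            by_cases h0 : n i = 0
            · simp [h0]
            · have : n i ≤ n.sum fun _ v => v := by
                unfold Finsupp.sum
                exact Finset.single_le_sum (f := fun i => n i) (fun _ _ => Nat.zero_le _)
                  (Finsupp.mem_support_iff.mpr h0)
              unfold pDeg; omega
          have : ν i = M := rfl
          omega
        have hμn : μ n = M := by rw [hμ]; exact Finsupp.indicator_of_mem hnν _
        have hemb : Finsupp.embDomain (⟨Sum.inr, Sum.inr_injective⟩ : PIdx d ↪ ℕ ⊕ PIdx d) μ (Sum.inr n) = μ n :=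
          Finsupp.embDomain_apply_self _ _ _
        calc γ (Sum.inr n) ≤ M := hgnM
          _ ≤ β (Sum.inr n) + M := Nat.le_add_left _ _
          _ = ub (Sum.inr n) := by rw [hub, Finsupp.add_apply, hemb, hμn]
  · -- triangularity
    intro β γ hne
    by_cases hγβ : γ = β
    · subst hγβ
      rw [if_pos rfl] at hne
      exact absurd (main _ γ le_rfl).2 hne
    · rw [if_neg hγβ] at hne
      exact ((main _ γ le_rfl).1 β hne).2.2 hγβ


/-- the multiplicative recentering map `Γ` of `ℝ[[z_k, z_n]]`
(determined by `Γ z_k = z_k`, `Γ z_n = z_n + π^{(n)}`, `Γ 1 = 1` and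
multiplicativity, given coefficientwise by the matrix `Γ_β^γ`), with
`π^{(n)}_β ≠ 0 ⟹ |n| < |β|`, is well defined (each row `β` has only finitely many
`γ` with `Γ_β^γ ≠ 0`) and strictly triangular with respect to homogeneity:
`(Γ − id)_β^γ ≠ 0 ⟹ |γ| < |β|`. -/
theorem gamma_welldefined_triangular {d : ℕ} (α : ℝ) (kb : ℕ) (hkb : 3 ≤ kb)
    (hα : α < 0) (ha : 0 < 2 + ((kb : ℝ) - 1) * α)
    (π : PIdx d → MIdx d → ℝ)
    (hπ : ∀ (n : PIdx d) (β : MIdx d), π n β ≠ 0 → (pDeg n : ℝ) < homog α kb β)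
    (Γ : MIdx d → MIdx d → ℝ)
    (hΓk : ∀ (k : ℕ) (β : MIdx d),
      Γ β (Finsupp.single (Sum.inl k) 1) =
        if β = Finsupp.single (Sum.inl k) 1 then 1 else 0)
    (hΓn : ∀ (n : PIdx d) (β : MIdx d),
      Γ β (Finsupp.single (Sum.inr n) 1) =
        (if β = Finsupp.single (Sum.inr n) 1 then 1 else 0) + π n β)
    (hΓ1 : ∀ β : MIdx d, Γ β 0 = if β = 0 then 1 else 0)
    (hΓmul : ∀ γ₁ γ₂ β : MIdx d,
      Γ β (γ₁ + γ₂) = ∑ p ∈ Finset.HasAntidiagonal.antidiagonal β, Γ p.1 γ₁ * Γ p.2 γ₂)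
    :
    (∀ β : MIdx d, {γ : MIdx d | Γ β γ ≠ 0}.Finite) ∧
    (∀ β γ : MIdx d, Γ β γ ≠ (if γ = β then 1 else 0) →
      homog α kb γ < homog α kb β) := by
  exact gamma_welldefined_triangular_aux α kb hkb hα ha π hπ Γ hΓk hΓn hΓ1 hΓmul
end

section
/- Exponential formula for the multiplicative recentering map: under the hypotheses of the definition of Γ, for every multiindex γ one has Γ z^γ = Σ_{M≥0} (1/M!) Σ_{n₁,…,n_M} π^{(n₁)}⋯π^{(n_M)} D^{n₁}⋯D^{n_M} z^γ, where D^n = ∂_{z_n}; equivalently, componentwise, Γ^γ_β = Σ_{M≥0} (1/M!) Σ_{n₁,…,n_M} Σ_{β₁+⋯+β_{M+1}=β} π^{(n₁)}_{β₁}⋯π^{(n_M)}_{β_M} (D^{n₁}⋯D^{n_M} z^γ)_{β_{M+1}}. -/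
/-- The coefficient at `z^β` of `D^{n₁} ⋯ D^{n_M} z^γ`, where `D^n = ∂_{z_n}`
acts by `(D^n z^γ)_β = γ(n) · 1_{β = γ − δ_n}` (the head of the list is the
leftmost, i.e. last applied, derivative). -/
noncomputable def dCoeff {d : ℕ} : List (PIdx d) → MIdx d → MIdx d → ℝ
  | [], γ, β => if β = γ then 1 else 0
  | n :: ns, γ, β =>
      ((β (Sum.inr n) : ℝ) + 1) * dCoeff ns γ (β + Finsupp.single (Sum.inr n) 1)

open scoped Classical

namespace GExp

variable {d : ℕ}

noncomputable def deg (β : MIdx d) : ℕ := β.sum fun _ v => v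

lemma deg_add (a b : MIdx d) : deg (a + b) = deg a + deg b :=
  Finsupp.sum_add_index' (fun _ => rfl) (fun _ _ _ => rfl)

lemma deg_single (j : ℕ ⊕ PIdx d) (m : ℕ) : deg (Finsupp.single j m) = m :=
  Finsupp.sum_single_index rfl

lemma deg_mono {a b : MIdx d} (h : a ≤ b) : deg a ≤ deg b := by
  have := add_tsub_cancel_of_le h
  calc deg a ≤ deg a + deg (b - a) := Nat.le_add_right _ _
  _ = deg b := by rw [← deg_add, this]

noncomputable def dlist : List (PIdx d) → MIdx d
  | [] => 0
  | n :: ns => Finsupp.single (Sum.inr n) 1 + dlist ns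

@[simp] lemma dlist_nil : dlist ([] : List (PIdx d)) = 0 := rfl
@[simp] lemma dlist_cons (n : PIdx d) (ns : List (PIdx d)) :
    dlist (n :: ns) = Finsupp.single (Sum.inr n) 1 + dlist ns := rfl

lemma deg_dlist (L : List (PIdx d)) : deg (dlist L) = L.length := by
  induction L with
  | nil => simp [deg]
  | cons n ns ih => simp [deg_add, deg_single, ih, Nat.add_comm]

lemma dlist_inl (L : List (PIdx d)) (k : ℕ) : dlist L (Sum.inl k) = 0 := by
  induction L with
  | nil => simp
  | cons n ns ih => simp [Finsupp.single_apply, ih]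

lemma dCoeff_eq_zero_iff (L : List (PIdx d)) (γ β : MIdx d) :
    dCoeff L γ β = 0 ↔ β + dlist L ≠ γ := by
  induction L generalizing β with
  | nil =>
      simp only [dCoeff, dlist_nil, add_zero]
      split <;> simp_all
  | cons n ns ih =>
      simp only [dCoeff, mul_eq_zero, dlist_cons]
      have h1 : ((β (Sum.inr n) : ℝ) + 1) ≠ 0 := by positivity
      rw [ih]
      constructor
      · rintro (h | h)
        · exact absurd h h1
        · intro he; exact h (by rw [← he]; abel)
      · intro h; right; intro he; exact h (by rw [← he]; abel)


variable {d : ℕ}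

lemma dCoeff_shift_inl (k : ℕ) (L : List (PIdx d)) (γ β : MIdx d) :
    dCoeff L (Finsupp.single (Sum.inl k) 1 + γ) (Finsupp.single (Sum.inl k) 1 + β) =
    dCoeff L γ β := by
  induction L generalizing β with
  | nil => simp [dCoeff, add_right_inj]
  | cons n ns ih =>
      simp only [dCoeff, Finsupp.add_apply, Finsupp.single_apply, if_neg (by simp : ¬ (Sum.inl k : ℕ ⊕ PIdx d) = Sum.inr n)]
      rw [add_assoc, ih]
      norm_num

lemma dCoeff_leibniz (n₀ : PIdx d) (L : List (PIdx d)) (γ β : MIdx d) :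
    dCoeff L (Finsupp.single (Sum.inr n₀) 1 + γ) β =
    (if Finsupp.single (Sum.inr n₀) 1 ≤ β then
        dCoeff L γ (β - Finsupp.single (Sum.inr n₀) 1) else 0)
    + ∑ i : Fin L.length, (if L.get i = n₀ then dCoeff (L.eraseIdx i) γ β else 0) := by
  set s : MIdx d := Finsupp.single (Sum.inr n₀) 1 with hs
  induction L generalizing β with
  | nil =>
      simp only [dCoeff, List.length_nil, Finset.univ_eq_empty, Finset.sum_empty, add_zero]
      by_cases h : s ≤ β
      · rw [if_pos h]
        have : β = s + γ ↔ β - s = γ := by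
          constructor
          · intro he; rw [he, add_comm]; exact add_tsub_cancel_right γ s
          · intro he; rw [← he, add_comm]; exact (tsub_add_cancel_of_le h).symm
        simp only [this]
      · rw [if_neg h, if_neg]
        intro he
        exact h (he ▸ le_add_right le_rfl)
  | cons n ns ih =>
      simp only [dCoeff, List.length_cons]
      rw [ih]
      rw [Fin.sum_univ_succ]
      simp only [List.get_cons_zero, List.get_cons_succ, List.eraseIdx_cons_zero,
        Fin.val_succ, List.eraseIdx_cons_succ, dCoeff]
      set δ : MIdx d := Finsupp.single (Sum.inr n) 1 with hδ
      have key : ((β (Sum.inr n) : ℝ) + 1) *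
          (if s ≤ β + δ then dCoeff ns γ (β + δ - s) else 0) =
          (if s ≤ β then (((β - s) (Sum.inr n) : ℝ) + 1) * dCoeff ns γ (β - s + δ) else 0)
          + (if n = n₀ then dCoeff ns γ β else 0) := by
        by_cases hn : n = n₀
        · subst hn
          have h1 : s ≤ β + δ := by rw [hδ, ← hs]; exact le_add_self
          have h2 : β + δ - s = β := by rw [hδ, ← hs]; exact add_tsub_cancel_right β s
          rw [if_pos h1, h2, if_pos rfl]
          by_cases h3 : s ≤ β
          · rw [if_pos h3]
            have hge : 1 ≤ β (Sum.inr n) := by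
              rw [hs] at h3; exact Finsupp.single_le_iff.mp h3
            have h4 : β - s + δ = β := by rw [hδ, ← hs]; exact tsub_add_cancel_of_le h3
            have h5 : (β - s) (Sum.inr n) = β (Sum.inr n) - 1 := by
              rw [hs, Finsupp.tsub_apply, Finsupp.single_apply, if_pos rfl]
            rw [h4, h5]
            have : ((β (Sum.inr n) - 1 : ℕ) : ℝ) + 1 = (β (Sum.inr n) : ℝ) := by
              have := Nat.cast_sub (R := ℝ) hge
              rw [this]; ring
            rw [this]; ring
          · rw [if_neg h3, zero_add]
            have h0 : β (Sum.inr n) = 0 := by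
              by_contra h
              exact h3 (by rw [hs]; exact Finsupp.single_le_iff.mpr (Nat.one_le_iff_ne_zero.mpr h))
            rw [h0]; norm_num
        · rw [if_neg hn, add_zero]
          have hiff : s ≤ β + δ ↔ s ≤ β := by
            rw [hs, Finsupp.single_le_iff, Finsupp.single_le_iff, Finsupp.add_apply, hδ,
              Finsupp.single_apply, if_neg (by simpa using hn), add_zero]
          by_cases h3 : s ≤ β
          · rw [if_pos (hiff.mpr h3), if_pos h3]
            have h4 : β + δ - s = β - s + δ := by
              rw [tsub_add_eq_add_tsub h3]
            have h5 : (β - s) (Sum.inr n) = β (Sum.inr n) := by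
              rw [hs, Finsupp.tsub_apply, Finsupp.single_apply,
                if_neg (by simpa using (Ne.symm hn))]
              simp
            rw [h4, h5]
          · rw [if_neg (fun h => h3 (hiff.mp h)), if_neg h3, mul_zero]
      have e0 : (n :: ns).eraseIdx (↑(0 : Fin (ns.length+1))) = ns := rfl
      have e1 : ∀ x : Fin ns.length, (n :: ns).get x.succ = ns.get x := fun x => rfl
      simp only [e0, e1, mul_add, Finset.mul_sum, mul_ite, mul_zero, key]
      ring


lemma val_succAbove {n : ℕ} (i : Fin (n+1)) (j : Fin n) :
    (i.succAbove j).val = if j.val < i.val then j.val else j.val + 1 := by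
  by_cases h : (j.castSucc : Fin (n+1)) < i
  · rw [Fin.succAbove_of_castSucc_lt _ _ h,
      if_pos (by simpa [Fin.lt_def] using h)]
    rfl
  · rw [Fin.succAbove_of_le_castSucc _ _ (le_of_not_gt h),
      if_neg (by simpa [Fin.lt_def] using h)]
    rfl

lemma eraseIdx_ofFn {α : Type*} {M : ℕ} (ns : Fin (M+1) → α) (i : Fin (M+1)) :
    (List.ofFn ns).eraseIdx i.val = List.ofFn (fun j => ns (i.succAbove j)) := by
  apply List.ext_getElem
  · simp [List.length_eraseIdx, i.isLt]
  · intro j h1 h2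
    simp only [List.length_ofFn] at h2
    rw [List.getElem_eraseIdx]
    split
    case isTrue h =>
      simp only [List.getElem_ofFn]
      congr 1
      apply Fin.ext
      rw [val_succAbove]
      simp [h]
    case isFalse h =>
      simp only [List.getElem_ofFn]
      congr 1
      apply Fin.ext
      rw [val_succAbove]
      simp [h]

lemma insertNth_eta {α : Type*} {M : ℕ} (i : Fin (M+1)) (g : Fin (M+1) → α) :
    i.insertNth (g i) (fun j => g (i.succAbove j)) = g :=
  Fin.insertNth_self_removeNth i g

lemma sum_piFinset_succAbove {X : Type*} [DecidableEq X] (s : Finset X) {M : ℕ} (i : Fin (M+1))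
    (f : (Fin (M+1) → X) → ℝ) :
    ∑ g ∈ Fintype.piFinset (fun _ : Fin (M+1) => s), f g =
    ∑ x ∈ s, ∑ g ∈ Fintype.piFinset (fun _ : Fin M => s), f (i.insertNth x g) := by
  rw [← Finset.sum_product']
  refine Finset.sum_nbij' (fun g => (g i, fun j => g (i.succAbove j)))
    (fun p => i.insertNth p.1 p.2) ?_ ?_ ?_ ?_ ?_
  · intro g hg
    rw [Fintype.mem_piFinset] at hg
    exact Finset.mem_product.mpr ⟨hg i, Fintype.mem_piFinset.mpr fun j => hg _⟩
  · intro p hp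
    obtain ⟨h1, h2⟩ := Finset.mem_product.mp hp
    rw [Fintype.mem_piFinset] at h2 ⊢
    refine fun a => Fin.succAboveCases i ?_ ?_ a
    · simpa using h1
    · intro j; simpa using h2 j
  · intro g _; exact insertNth_eta i g
  · intro p _
    refine Prod.ext ?_ ?_
    · simp
    · funext j; simp
  · intro g _; rw [insertNth_eta]


noncomputable def NSet (γ : MIdx d) : Finset (PIdx d) :=
  γ.support.biUnion (fun j => match j with | Sum.inl _ => ∅ | Sum.inr n => {n})

lemma mem_NSet {γ : MIdx d} {n : PIdx d} : n ∈ NSet γ ↔ γ (Sum.inr n) ≠ 0 := by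
  simp only [NSet, Finset.mem_biUnion, Finsupp.mem_support_iff]
  constructor
  · rintro ⟨j, hj, hn⟩
    cases j with
    | inl k => simp at hn
    | inr m => simp at hn; subst hn; exact hj
  · intro h; exact ⟨Sum.inr n, h, by simp⟩

lemma NSet_mono {γ γ' : MIdx d} (h : γ ≤ γ') : NSet γ ⊆ NSet γ' := by
  intro n hn
  rw [mem_NSet] at hn ⊢
  have := (Finsupp.le_def.mp h) (Sum.inr n)
  omega

lemma dlist_inr_pos {L : List (PIdx d)} {n : PIdx d} (h : n ∈ L) :
    1 ≤ dlist L (Sum.inr n) := by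
  induction L with
  | nil => simp at h
  | cons m ms ih =>
      rcases List.mem_cons.mp h with h | h
      · subst h
        simp [Finsupp.add_apply, Finsupp.single_apply]
      · simp only [dlist_cons, Finsupp.add_apply]
        exact (ih h).trans (Nat.le_add_left _ _)

noncomputable def term (π : PIdx d → MIdx d → ℝ) (γ β : MIdx d) {M : ℕ}
    (ns : Fin M → PIdx d) (bs : Fin M → MIdx d) : ℝ :=
  if (∑ i, bs i) ≤ β then
    (∏ i, π (ns i) (bs i)) * dCoeff (List.ofFn ns) γ (β - ∑ i, bs i)
  else 0

lemma term_eq_zero_ns {π : PIdx d → MIdx d → ℝ} {γ β : MIdx d} {M : ℕ}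
    {ns : Fin M → PIdx d} {bs : Fin M → MIdx d} (i : Fin M)
    (h : ns i ∉ NSet γ) : term π γ β ns bs = 0 := by
  rw [term]; split
  · rw [(dCoeff_eq_zero_iff _ _ _).mpr, mul_zero]
    intro he
    apply h
    rw [mem_NSet]
    have h1 : 1 ≤ dlist (List.ofFn ns) (Sum.inr (ns i)) :=
      dlist_inr_pos (by rw [List.mem_ofFn]; exact ⟨i, rfl⟩)
    have h2 := congrArg (fun f => f (Sum.inr (ns i))) he
    simp only [Finsupp.add_apply] at h2
    omega
  · rfl

lemma term_eq_zero_bs {π : PIdx d → MIdx d → ℝ} {γ β : MIdx d} {M : ℕ}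
    {ns : Fin M → PIdx d} {bs : Fin M → MIdx d} (i : Fin M)
    (h : ¬ bs i ≤ β) : term π γ β ns bs = 0 := by
  rw [term, if_neg]
  intro hc
  exact h (le_trans (Finset.single_le_sum (fun j _ => zero_le) (Finset.mem_univ i)) hc)

lemma term_eq_zero_deg {π : PIdx d → MIdx d → ℝ} {γ β : MIdx d} {M : ℕ}
    {ns : Fin M → PIdx d} {bs : Fin M → MIdx d} (h : deg γ < M) :
    term π γ β ns bs = 0 := by
  rw [term]; split
  · rw [(dCoeff_eq_zero_iff _ _ _).mpr, mul_zero]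
    intro he
    have h2 := congrArg deg he
    rw [deg_add, deg_dlist, List.length_ofFn] at h2
    omega
  · rfl

noncomputable def T (π : PIdx d → MIdx d → ℝ) (M : ℕ) (β γ : MIdx d) : ℝ :=
  ∑' ns : Fin M → PIdx d, ∑' bs : Fin M → MIdx d, term π γ β ns bs

lemma T_eq_sum (π : PIdx d → MIdx d → ℝ) (M : ℕ) (β γ : MIdx d)
    {NN : Finset (PIdx d)} (hN : NSet γ ⊆ NN)
    {BB : Finset (MIdx d)} (hB : Finset.Iic β ⊆ BB) :
    T π M β γ = ∑ ns ∈ Fintype.piFinset (fun _ : Fin M => NN),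
      ∑ bs ∈ Fintype.piFinset (fun _ : Fin M => BB), term π γ β ns bs := by
  rw [T, tsum_eq_sum (s := Fintype.piFinset (fun _ : Fin M => NN)) ?_]
  · refine Finset.sum_congr rfl fun ns _ => ?_
    rw [tsum_eq_sum (s := Fintype.piFinset (fun _ : Fin M => BB)) ?_]
    intro bs hbs
    rw [Fintype.mem_piFinset] at hbs; push_neg at hbs
    obtain ⟨i, hi⟩ := hbs
    exact term_eq_zero_bs i (fun hle => hi (hB (Finset.mem_Iic.mpr hle)))
  · intro ns hns
    rw [Fintype.mem_piFinset] at hns; push_neg at hns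
    obtain ⟨i, hi⟩ := hns
    have hz : ∀ bs : Fin M → MIdx d, term π γ β ns bs = 0 :=
      fun bs => term_eq_zero_ns i (fun hm => hi (hN hm))
    simp [hz]

lemma T_eq_zero {π : PIdx d → MIdx d → ℝ} {M : ℕ} {β γ : MIdx d} (h : deg γ < M) :
    T π M β γ = 0 := by
  rw [T]
  have h1 : ∀ (ns : Fin M → PIdx d) (bs : Fin M → MIdx d),
      term π γ β ns bs = (0:ℝ) := fun _ _ => term_eq_zero_deg h
  simp only [h1, tsum_zero]

noncomputable def F (π : PIdx d → MIdx d → ℝ) (β γ : MIdx d) : ℝ :=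
  ∑' M : ℕ, (M.factorial : ℝ)⁻¹ * T π M β γ

lemma F_eq_sum (π : PIdx d → MIdx d → ℝ) (β γ : MIdx d) {K : ℕ} (hK : deg γ < K) :
    F π β γ = ∑ M ∈ Finset.range K, (M.factorial : ℝ)⁻¹ * T π M β γ := by
  rw [F, tsum_eq_sum]
  intro M hM
  rw [Finset.mem_range, not_lt] at hM
  rw [T_eq_zero (lt_of_lt_of_le hK hM), mul_zero]

lemma deg_eq_zero : deg (0 : MIdx d) = 0 := by simp [deg]

lemma T_zero_zero (π : PIdx d → MIdx d → ℝ) (β : MIdx d) :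
    T π 0 β 0 = if β = 0 then 1 else 0 := by
  rw [T]
  rw [tsum_eq_single (fun i : Fin 0 => i.elim0)
    (fun b' hb' => absurd (funext fun i => i.elim0) hb')]
  rw [tsum_eq_single (fun i : Fin 0 => i.elim0)
    (fun b' hb' => absurd (funext fun i => i.elim0) hb')]
  rw [term]
  simp [dCoeff, List.ofFn_zero]

lemma F_zero (π : PIdx d → MIdx d → ℝ) (β : MIdx d) :
    F π β 0 = if β = 0 then 1 else 0 := by
  rw [F_eq_sum π β 0 (K := 1) (by rw [deg_eq_zero]; omega)]
  rw [Finset.sum_range_one, T_zero_zero]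
  norm_num

lemma term_step_inl (π : PIdx d → MIdx d → ℝ) (k : ℕ) (γ β : MIdx d) {M : ℕ}
    (ns : Fin M → PIdx d) (bs : Fin M → MIdx d) :
    term π (Finsupp.single (Sum.inl k) 1 + γ) β ns bs =
    if Finsupp.single (Sum.inl k) 1 ≤ β then
      term π γ (β - Finsupp.single (Sum.inl k) 1) ns bs
    else 0 := by
  set s : MIdx d := Finsupp.single (Sum.inl k) 1 with hs
  have hsk : s (Sum.inl k) = 1 := by rw [hs, Finsupp.single_apply, if_pos rfl]
  have hsj : ∀ j, j ≠ Sum.inl k → s j = 0 := fun j hj => by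
    rw [hs, Finsupp.single_apply, if_neg (Ne.symm hj)]
  by_cases hb : s ≤ β
  · rw [if_pos hb, term, term]
    by_cases h2 : (∑ i, bs i) ≤ β - s
    · rw [if_pos h2, if_pos (h2.trans tsub_le_self)]
      congr 1
      have he : β - ∑ i, bs i = s + (β - s - ∑ i, bs i) := by
        ext j
        simp only [Finsupp.add_apply, Finsupp.tsub_apply]
        have h3 := Finsupp.le_def.mp hb j
        have h4 := Finsupp.le_def.mp h2 j
        simp only [Finsupp.tsub_apply] at h4
        omega
      rw [he, hs, dCoeff_shift_inl]
    · rw [if_neg h2]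
      split
      next h1 =>
        rw [(dCoeff_eq_zero_iff _ _ _).mpr, mul_zero]
        intro he
        have h5 := congrArg (fun f => f (Sum.inl k)) he
        simp only [Finsupp.add_apply, Finsupp.tsub_apply, dlist_inl, hsk] at h5
        have h6 : ¬ ((∑ i, bs i) (Sum.inl k) ≤ (β - s) (Sum.inl k)) := by
          intro hc
          apply h2
          rw [Finsupp.le_def]
          intro j
          by_cases hj : j = Sum.inl k
          · subst hj; exact hc
          · have h7 := Finsupp.le_def.mp h1 j
            simp only [Finsupp.tsub_apply, hsj j hj]
            omega
        simp only [Finsupp.tsub_apply, hsk] at h6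
        have h7 := Finsupp.le_def.mp h1 (Sum.inl k)
        have h8 := Finsupp.le_def.mp hb (Sum.inl k)
        rw [hsk] at h8
        omega
      next => rfl
  · rw [if_neg hb, term]
    split
    next h1 =>
      rw [(dCoeff_eq_zero_iff _ _ _).mpr, mul_zero]
      intro he
      have h5 := congrArg (fun f => f (Sum.inl k)) he
      simp only [Finsupp.add_apply, Finsupp.tsub_apply, dlist_inl, hsk] at h5
      have h8 : β (Sum.inl k) = 0 := by
        by_contra hc
        exact hb (by rw [hs]; exact Finsupp.single_le_iff.mpr (by omega))
      have h7 := Finsupp.le_def.mp h1 (Sum.inl k)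
      omega
    next => rfl

lemma F_step_inl (π : PIdx d → MIdx d → ℝ) (k : ℕ) (γ β : MIdx d) :
    F π β (Finsupp.single (Sum.inl k) 1 + γ) =
    if Finsupp.single (Sum.inl k) 1 ≤ β then
      F π (β - Finsupp.single (Sum.inl k) 1) γ
    else 0 := by
  by_cases hb : (Finsupp.single (Sum.inl k) 1 : MIdx d) ≤ β
  · rw [if_pos hb, F, F]
    refine tsum_congr fun M => ?_
    congr 1
    rw [T, T]
    refine tsum_congr fun ns => tsum_congr fun bs => ?_
    rw [term_step_inl, if_pos hb]
  · rw [if_neg hb, F]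
    have h1 : ∀ M, T π M β (Finsupp.single (Sum.inl k) 1 + γ) = 0 := fun M => by
      rw [T]
      have h2 : ∀ (ns : Fin M → PIdx d) (bs : Fin M → MIdx d),
          term π (Finsupp.single (Sum.inl k) 1 + γ) β ns bs = (0:ℝ) := fun ns bs => by
        rw [term_step_inl, if_neg hb]
      simp only [h2, tsum_zero]
    simp only [h1, mul_zero, tsum_zero]

lemma dCoeff_leibniz_ofFn (n₀ : PIdx d) {M : ℕ} (ns : Fin M → PIdx d) (γ β : MIdx d) :
    dCoeff (List.ofFn ns) (Finsupp.single (Sum.inr n₀) 1 + γ) β =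
    (if Finsupp.single (Sum.inr n₀) 1 ≤ β then
        dCoeff (List.ofFn ns) γ (β - Finsupp.single (Sum.inr n₀) 1) else 0)
    + ∑ i : Fin M, (if ns i = n₀ then dCoeff ((List.ofFn ns).eraseIdx i.val) γ β else 0) := by
  rw [dCoeff_leibniz]
  congr 1
  refine Fintype.sum_equiv (finCongr (List.length_ofFn : (List.ofFn ns).length = M)) _ _ fun i => ?_
  rw [List.get_ofFn]
  rfl

lemma T_M0 (π : PIdx d → MIdx d → ℝ) (β γ' : MIdx d) :
    T π 0 β γ' = if β = γ' then 1 else 0 := by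
  rw [T]
  rw [tsum_eq_single (fun i : Fin 0 => i.elim0)
    (fun b' hb' => absurd (funext fun i => i.elim0) hb')]
  rw [tsum_eq_single (fun i : Fin 0 => i.elim0)
    (fun b' hb' => absurd (funext fun i => i.elim0) hb')]
  rw [term]
  simp [dCoeff, List.ofFn_zero]

noncomputable def Bterm (π : PIdx d → MIdx d → ℝ) (n₀ : PIdx d) (γ β : MIdx d) {M : ℕ}
    (ns : Fin (M+1) → PIdx d) (bs : Fin (M+1) → MIdx d) (i : Fin (M+1)) : ℝ :=
  if (∑ j, bs j) ≤ β then
    (if ns i = n₀ then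
      (∏ j, π (ns j) (bs j)) *
        dCoeff (List.ofFn (fun j => ns (i.succAbove j))) γ (β - ∑ j, bs j)
    else 0)
  else 0

lemma term_split_inr (π : PIdx d → MIdx d → ℝ) (n₀ : PIdx d) (γ β : MIdx d) {M : ℕ}
    (ns : Fin (M+1) → PIdx d) (bs : Fin (M+1) → MIdx d) :
    term π (Finsupp.single (Sum.inr n₀) 1 + γ) β ns bs =
    (if Finsupp.single (Sum.inr n₀) 1 ≤ β then
        term π γ (β - Finsupp.single (Sum.inr n₀) 1) ns bs else 0)
    + ∑ i : Fin (M+1), Bterm π n₀ γ β ns bs i := by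
  set s : MIdx d := Finsupp.single (Sum.inr n₀) 1 with hs
  by_cases hc : (∑ j, bs j) ≤ β
  · rw [term, if_pos hc, dCoeff_leibniz_ofFn, mul_add, Finset.mul_sum]
    refine congrArg₂ (· + ·) ?_ ?_
    · by_cases hb : s ≤ β
      · rw [if_pos hb, term]
        have h1 : s ≤ β - ∑ j, bs j ↔ (∑ j, bs j) ≤ β - s := by
          rw [le_tsub_iff_left hc, le_tsub_iff_right hb]
        by_cases h2 : (∑ j, bs j) ≤ β - s
        · rw [if_pos h2, if_pos (h1.mpr h2), tsub_right_comm]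
        · rw [if_neg (fun h => h2 (h1.mp h)), if_neg h2, mul_zero]
      · rw [if_neg hb]
        rw [if_neg (fun h => hb (h.trans tsub_le_self)), mul_zero]
    · refine Finset.sum_congr rfl fun i _ => ?_
      rw [eraseIdx_ofFn, mul_ite, mul_zero, Bterm, if_pos hc]
  · rw [term, if_neg hc]
    have hA : (if s ≤ β then term π γ (β - s) ns bs else 0) = 0 := by
      split
      · rw [term, if_neg (fun h => hc (h.trans tsub_le_self))]
      · rfl
    have hB : ∀ i, Bterm π n₀ γ β ns bs i = 0 := fun i => by
      rw [Bterm, if_neg hc]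
    simp [hA, hB]

lemma sum_Iic_antidiagonal (β : MIdx d) (f : MIdx d → MIdx d → ℝ) :
    ∑ b ∈ Finset.Iic β, f b (β - b) = ∑ p ∈ Finset.HasAntidiagonal.antidiagonal β, f p.1 p.2 := by
  refine Finset.sum_nbij' (fun b => (b, β - b)) (fun p => p.1) ?_ ?_ ?_ ?_ ?_
  · intro b hb
    rw [Finset.HasAntidiagonal.mem_antidiagonal]
    exact add_tsub_cancel_of_le (Finset.mem_Iic.mp hb)
  · intro p hp
    rw [Finset.HasAntidiagonal.mem_antidiagonal] at hp
    exact Finset.mem_Iic.mpr (hp ▸ self_le_add_right p.1 p.2)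
  · intro b _; rfl
  · intro p hp
    rw [Finset.HasAntidiagonal.mem_antidiagonal] at hp
    have h2 : β - p.1 = p.2 := by rw [← hp]; exact add_tsub_cancel_left p.1 p.2
    exact Prod.ext rfl h2
  · intro b _; rfl

lemma Q_lemma (π : PIdx d → MIdx d → ℝ) (n₀ : PIdx d) (γ β : MIdx d) {M : ℕ}
    (i : Fin (M+1)) :
    ∑ ns ∈ Fintype.piFinset
        (fun _ : Fin (M+1) => NSet (Finsupp.single (Sum.inr n₀) 1 + γ)),
      ∑ bs ∈ Fintype.piFinset (fun _ : Fin (M+1) => Finset.Iic β),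
        Bterm π n₀ γ β ns bs i =
    ∑ b ∈ Finset.Iic β, π n₀ b * T π M (β - b) γ := by
  set s : MIdx d := Finsupp.single (Sum.inr n₀) 1 with hs
  set NN : Finset (PIdx d) := NSet (s + γ) with hNN
  have hγle : γ ≤ s + γ := le_add_self
  have hn₀NN : n₀ ∈ NN := by
    rw [hNN, mem_NSet, Finsupp.add_apply, hs, Finsupp.single_apply, if_pos rfl]
    omega
  rw [sum_piFinset_succAbove NN i]
  have e2 : ∀ (x : PIdx d) (ns' : Fin M → PIdx d),
      (fun j => (i.insertNth x ns' : Fin (M+1) → PIdx d) (i.succAbove j)) = ns' :=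
    fun x ns' => funext fun j => by simp
  have e1 : ∀ (x : PIdx d) (ns' : Fin M → PIdx d) (bs : Fin (M+1) → MIdx d),
      Bterm π n₀ γ β ((i.insertNth x ns' : Fin (M+1) → PIdx d)) bs i =
      if x = n₀ then
        (if (∑ j, bs j) ≤ β then
          (∏ j, π ((i.insertNth x ns' : Fin (M+1) → PIdx d) j) (bs j)) *
            dCoeff (List.ofFn ns') γ (β - ∑ j, bs j)
        else 0)
      else 0 := by
    intro x ns' bs
    by_cases hx : x = n₀ <;> by_cases hc2 : (∑ j, bs j) ≤ β <;>
      simp [Bterm, e2, hx, hc2]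
  simp only [e1]
  rw [Finset.sum_congr rfl (fun x _ => Finset.sum_congr rfl (fun ns' _ =>
    (Finset.sum_ite_irrel _ _ _ _).trans (by rw [Finset.sum_const_zero])))]
  rw [Finset.sum_congr rfl (fun x _ => (Finset.sum_ite_irrel _ _ _ _).trans
    (by rw [Finset.sum_const_zero]))]
  rw [Finset.sum_ite_eq' NN n₀, if_pos hn₀NN]
  rw [Finset.sum_congr rfl (fun ns' _ => sum_piFinset_succAbove (Finset.Iic β) i _)]
  have e3 : ∀ (ns' : Fin M → PIdx d) (b : MIdx d) (bs' : Fin M → MIdx d), (hb : b ≤ β) →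
      (if (∑ j, (i.insertNth b bs' : Fin (M+1) → MIdx d) j) ≤ β then
        (∏ j, π ((i.insertNth n₀ ns' : Fin (M+1) → PIdx d) j) ((i.insertNth b bs' : Fin (M+1) → MIdx d) j)) *
          dCoeff (List.ofFn ns') γ (β - ∑ j, (i.insertNth b bs' : Fin (M+1) → MIdx d) j)
      else 0) = π n₀ b * term π γ (β - b) ns' bs' := by
    intro ns' b bs' hb
    have hsum : (∑ j, (i.insertNth b bs' : Fin (M+1) → MIdx d) j) = b + ∑ j, bs' j := by
      rw [Fin.sum_univ_succAbove _ i]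
      simp
    have hprod : (∏ j, π ((i.insertNth n₀ ns' : Fin (M+1) → PIdx d) j) ((i.insertNth b bs' : Fin (M+1) → MIdx d) j)) =
        π n₀ b * ∏ j, π (ns' j) (bs' j) := by
      rw [Fin.prod_univ_succAbove _ i]
      simp
    rw [hsum, hprod, term]
    have hcond : b + (∑ j, bs' j) ≤ β ↔ (∑ j, bs' j) ≤ β - b := (le_tsub_iff_left hb).symm
    have hsub : β - (b + ∑ j, bs' j) = (β - b) - ∑ j, bs' j := tsub_add_eq_tsub_tsub β b _
    by_cases h4 : (∑ j, bs' j) ≤ β - b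
    · rw [if_pos (hcond.mpr h4), if_pos h4, hsub, mul_assoc]
    · rw [if_neg (fun h => h4 (hcond.mp h)), if_neg h4, mul_zero]
  rw [Finset.sum_congr rfl (fun ns' _ => Finset.sum_congr rfl (fun b hb =>
    Finset.sum_congr rfl (fun bs' _ => e3 ns' b bs' (Finset.mem_Iic.mp hb))))]
  rw [Finset.sum_comm]
  refine Finset.sum_congr rfl fun b hb => ?_
  simp only [← Finset.mul_sum]
  congr 1
  rw [T_eq_sum π M (β - b) γ (NSet_mono hγle) (Finset.Iic_subset_Iic.mpr tsub_le_self)]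

lemma T_step_inr (π : PIdx d → MIdx d → ℝ) (n₀ : PIdx d) (γ β : MIdx d) (M : ℕ) :
    T π (M+1) β (Finsupp.single (Sum.inr n₀) 1 + γ) =
    (if Finsupp.single (Sum.inr n₀) 1 ≤ β then
        T π (M+1) (β - Finsupp.single (Sum.inr n₀) 1) γ else 0)
    + ((M+1 : ℕ) : ℝ) * ∑ p ∈ Finset.HasAntidiagonal.antidiagonal β, π n₀ p.1 * T π M p.2 γ := by
  set s : MIdx d := Finsupp.single (Sum.inr n₀) 1 with hs
  have hγle : γ ≤ s + γ := le_add_self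
  rw [T_eq_sum π (M+1) β (s+γ) (Finset.Subset.refl _) (Finset.Subset.refl _)]
  have hsplit := term_split_inr π n₀ γ β (M := M)
  rw [← hs] at hsplit
  simp only [hsplit]
  rw [Finset.sum_congr rfl (fun ns _ => Finset.sum_add_distrib), Finset.sum_add_distrib]
  congr 1
  · by_cases hb : s ≤ β
    · simp only [if_pos hb]
      rw [← T_eq_sum π (M+1) (β - s) γ (NSet_mono hγle)
        (Finset.Iic_subset_Iic.mpr tsub_le_self)]
    · simp only [if_neg hb]
      simp
  · rw [Finset.sum_congr rfl (fun ns _ => Finset.sum_comm), Finset.sum_comm]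
    rw [Finset.sum_congr rfl (fun i _ => Q_lemma π n₀ γ β i)]
    rw [Finset.sum_const, Finset.card_univ, Fintype.card_fin, nsmul_eq_mul]
    congr 1
    exact sum_Iic_antidiagonal β (fun b c => π n₀ b * T π M c γ)

lemma factorial_step (M : ℕ) (X Y : ℝ) :
    ((M+1).factorial : ℝ)⁻¹ * (X + ((M+1 : ℕ) : ℝ) * Y) =
    ((M+1).factorial : ℝ)⁻¹ * X + (M.factorial : ℝ)⁻¹ * Y := by
  have h1 : ((M+1).factorial : ℝ) = ((M+1 : ℕ) : ℝ) * (M.factorial : ℝ) := by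
    rw [Nat.factorial_succ]; push_cast; ring
  have h2 : ((M+1 : ℕ) : ℝ) ≠ 0 := Nat.cast_ne_zero.mpr (Nat.succ_ne_zero M)
  have h3 : (M.factorial : ℝ) ≠ 0 := Nat.cast_ne_zero.mpr (Nat.factorial_ne_zero M)
  rw [h1, mul_inv, mul_add]
  rw [mul_comm (((M+1 : ℕ) : ℝ))⁻¹ ((M.factorial : ℝ))⁻¹, mul_assoc, mul_assoc,
    inv_mul_cancel_left₀ h2]

lemma F_step_inr (π : PIdx d → MIdx d → ℝ) (n₀ : PIdx d) (γ β : MIdx d) :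
    F π β (Finsupp.single (Sum.inr n₀) 1 + γ) =
    (if Finsupp.single (Sum.inr n₀) 1 ≤ β then
        F π (β - Finsupp.single (Sum.inr n₀) 1) γ else 0)
    + ∑ p ∈ Finset.HasAntidiagonal.antidiagonal β, π n₀ p.1 * F π p.2 γ := by
  set s : MIdx d := Finsupp.single (Sum.inr n₀) 1 with hs
  set J : ℕ := deg γ + 1 with hJ
  have hdegsγ : deg (s + γ) < J + 1 := by
    rw [deg_add, hs, deg_single]; omega
  have hdegJ1 : deg γ < J + 1 := by omega
  have hdegJ : deg γ < J := by omega
  rw [F_eq_sum π β (s + γ) hdegsγ, Finset.sum_range_succ']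
  have hstep : ∀ M, ((M+1).factorial : ℝ)⁻¹ * T π (M+1) β (s + γ) =
      ((M+1).factorial : ℝ)⁻¹ * (if s ≤ β then T π (M+1) (β - s) γ else 0)
      + (M.factorial : ℝ)⁻¹ * ∑ p ∈ Finset.HasAntidiagonal.antidiagonal β, π n₀ p.1 * T π M p.2 γ := by
    intro M
    rw [T_step_inr π n₀ γ β M]
    exact factorial_step M _ _
  rw [Finset.sum_congr rfl (fun M _ => hstep M), Finset.sum_add_distrib]
  have hT0 : T π 0 β (s + γ) = if s ≤ β then T π 0 (β - s) γ else 0 := by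
    rw [T_M0]
    by_cases hb : s ≤ β
    · rw [if_pos hb, T_M0]
      have hiff : β = s + γ ↔ β - s = γ := by
        constructor
        · intro he; rw [he, add_comm]; exact add_tsub_cancel_right γ s
        · intro he; rw [← he, add_comm]; exact (tsub_add_cancel_of_le hb).symm
      simp only [hiff]
    · rw [if_neg hb, if_neg (fun he => hb (by rw [he]; exact le_self_add))]
  rw [hT0]
  have hA : (∑ M ∈ Finset.range J,
        ((M+1).factorial : ℝ)⁻¹ * (if s ≤ β then T π (M+1) (β - s) γ else 0))
      + ((Nat.factorial 0 : ℕ) : ℝ)⁻¹ * (if s ≤ β then T π 0 (β - s) γ else 0)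
      = (if s ≤ β then F π (β - s) γ else 0) := by
    by_cases hb : s ≤ β
    · simp only [if_pos hb]
      rw [← Finset.sum_range_succ'
        (fun M => ((M.factorial : ℕ) : ℝ)⁻¹ * T π M (β - s) γ) J]
      rw [← F_eq_sum π (β - s) γ hdegJ1]
    · simp only [if_neg hb, mul_zero, Finset.sum_const_zero, add_zero]
  have hB : (∑ M ∈ Finset.range J,
        (M.factorial : ℝ)⁻¹ * ∑ p ∈ Finset.HasAntidiagonal.antidiagonal β, π n₀ p.1 * T π M p.2 γ)
      = ∑ p ∈ Finset.HasAntidiagonal.antidiagonal β, π n₀ p.1 * F π p.2 γ := by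
    simp only [Finset.mul_sum]
    rw [Finset.sum_comm]
    refine Finset.sum_congr rfl fun p _ => ?_
    rw [F_eq_sum π p.2 γ hdegJ, Finset.mul_sum]
    exact Finset.sum_congr rfl fun M _ => by ring
  rw [← hA, ← hB]
  ring

lemma sum_antidiagonal_indicator (β a : MIdx d) (f : MIdx d → ℝ) :
    ∑ p ∈ Finset.HasAntidiagonal.antidiagonal β, (if p.1 = a then (1:ℝ) else 0) * f p.2 =
    if a ≤ β then f (β - a) else 0 := by
  by_cases ha : a ≤ β
  · rw [if_pos ha]
    rw [Finset.sum_eq_single (a, β - a)]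
    · rw [if_pos rfl, one_mul]
    · rintro ⟨p1, p2⟩ hp hne
      rw [Finset.HasAntidiagonal.mem_antidiagonal] at hp
      rcases eq_or_ne p1 a with rfl | h
      · exfalso
        apply hne
        have h2 : p2 = β - p1 := by rw [← hp]; exact (add_tsub_cancel_left p1 p2).symm
        rw [h2]
      · rw [if_neg h, zero_mul]
    · intro hmem
      exact absurd (Finset.HasAntidiagonal.mem_antidiagonal.mpr (add_tsub_cancel_of_le ha)) hmem
  · rw [if_neg ha]
    apply Finset.sum_eq_zero
    rintro ⟨p1, p2⟩ hp
    rw [Finset.HasAntidiagonal.mem_antidiagonal] at hp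
    rw [if_neg, zero_mul]
    rintro rfl
    exact ha (hp ▸ self_le_add_right p1 p2)

lemma deg_pos_of_ne_zero {γ : MIdx d} (h : γ ≠ 0) : 1 ≤ deg γ := by
  obtain ⟨j, hj⟩ := Finsupp.ne_iff.mp h
  rw [Finsupp.coe_zero, Pi.zero_apply] at hj
  have h1 : γ j ≤ deg γ :=
    Finset.single_le_sum (f := fun a => γ a) (fun _ _ => Nat.zero_le _)
      (Finsupp.mem_support_iff.mpr hj)
  omega

end GExp

open scoped Classical in
/-- exponential formula for the multiplicative recentering map:
`Γ^γ_β = Σ_{M≥0} (1/M!) Σ_{n₁,…,n_M} Σ_{β₁+⋯+β_{M+1}=β}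
π^{(n₁)}_{β₁} ⋯ π^{(n_M)}_{β_M} (D^{n₁}⋯D^{n_M} z^γ)_{β_{M+1}}`,
all the sums having only finitely many nonzero terms. -/
theorem gamma_exponential_formula {d : ℕ} (α : ℝ) (kb : ℕ) (hkb : 3 ≤ kb)
    (hα : α < 0) (ha : 0 < 2 + ((kb : ℝ) - 1) * α)
    (π : PIdx d → MIdx d → ℝ)
    (hπ : ∀ (n : PIdx d) (β : MIdx d), π n β ≠ 0 → (pDeg n : ℝ) < homog α kb β)
    (Γ : MIdx d → MIdx d → ℝ)
    (hΓk : ∀ (k : ℕ) (β : MIdx d),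
      Γ β (Finsupp.single (Sum.inl k) 1) =
        if β = Finsupp.single (Sum.inl k) 1 then 1 else 0)
    (hΓn : ∀ (n : PIdx d) (β : MIdx d),
      Γ β (Finsupp.single (Sum.inr n) 1) =
        (if β = Finsupp.single (Sum.inr n) 1 then 1 else 0) + π n β)
    (hΓ1 : ∀ β : MIdx d, Γ β 0 = if β = 0 then 1 else 0)
    (hΓmul : ∀ γ₁ γ₂ β : MIdx d,
      Γ β (γ₁ + γ₂) = ∑ p ∈ Finset.HasAntidiagonal.antidiagonal β, Γ p.1 γ₁ * Γ p.2 γ₂)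
    :
    ∀ β γ : MIdx d,
      Γ β γ = ∑' M : ℕ, (M.factorial : ℝ)⁻¹ *
        ∑' ns : Fin M → PIdx d, ∑' bs : Fin M → MIdx d,
          if (∑ i, bs i) ≤ β then
            (∏ i, π (ns i) (bs i)) * dCoeff (List.ofFn ns) γ (β - ∑ i, bs i)
          else 0 := by
  have main : ∀ (N : ℕ) (γ β : MIdx d), GExp.deg γ ≤ N → Γ β γ = GExp.F π β γ := by
    intro N
    induction N with
    | zero =>
        intro γ β hdeg
        have hγ : γ = 0 := by
          by_contra hne
          have := GExp.deg_pos_of_ne_zero hne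
          omega
        subst hγ
        rw [hΓ1, GExp.F_zero]
    | succ N ih =>
        intro γ β hdeg
        by_cases hγ : γ = 0
        · subst hγ; rw [hΓ1, GExp.F_zero]
        · obtain ⟨j, hj⟩ := Finsupp.ne_iff.mp hγ
          rw [Finsupp.coe_zero, Pi.zero_apply] at hj
          have hle : Finsupp.single j 1 ≤ γ :=
            Finsupp.single_le_iff.mpr (Nat.one_le_iff_ne_zero.mpr hj)
          have hsplit : γ = Finsupp.single j 1 + (γ - Finsupp.single j 1) :=
            (add_tsub_cancel_of_le hle).symm
          set γ' : MIdx d := γ - Finsupp.single j 1 with hγ'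
          have hdeg' : GExp.deg γ' ≤ N := by
            have h2 := congrArg GExp.deg hsplit
            rw [GExp.deg_add, GExp.deg_single] at h2
            omega
          rw [hsplit, hΓmul]
          cases j with
          | inl k =>
              have hterm : ∀ p ∈ Finset.HasAntidiagonal.antidiagonal β,
                  Γ p.1 (Finsupp.single (Sum.inl k) 1) * Γ p.2 γ' =
                  (if p.1 = Finsupp.single (Sum.inl k) 1 then (1:ℝ) else 0) *
                    GExp.F π p.2 γ' :=
                fun p _ => by rw [hΓk, ih γ' p.2 hdeg']
              rw [Finset.sum_congr rfl hterm, GExp.F_step_inl]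
              exact GExp.sum_antidiagonal_indicator β _ (fun x => GExp.F π x γ')
          | inr n₀ =>
              have hterm : ∀ p ∈ Finset.HasAntidiagonal.antidiagonal β,
                  Γ p.1 (Finsupp.single (Sum.inr n₀) 1) * Γ p.2 γ' =
                  (if p.1 = Finsupp.single (Sum.inr n₀) 1 then (1:ℝ) else 0) *
                    GExp.F π p.2 γ' + π n₀ p.1 * GExp.F π p.2 γ' :=
                fun p _ => by rw [hΓn, ih γ' p.2 hdeg', add_mul]
              rw [Finset.sum_congr rfl hterm, Finset.sum_add_distrib,
                GExp.F_step_inr]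
              exact congrArg₂ (· + ·)
                (GExp.sum_antidiagonal_indicator β _ (fun x => GExp.F π x γ')) rfl
  intro β γ
  exact main (GExp.deg γ) γ β le_rfl
end

section
/- Let dΓ be the derivation-like map on ℝ[[z_k,z_n]] determined by dΓ z_k = 0, dΓ z_n = dπ^{(n)}, and dΓ(π₁π₂) = (dΓπ₁)(Γπ₂) + (Γπ₁)(dΓπ₂), where dπ^{(n)}_β ≠ 0 implies |n| < α + D/p̄ (with p̄ ≥ 2). Then dΓ satisfies the closed formula dΓ z^γ = Σ_n dπ^{(n)} · Γ(D^n z^γ), and the triangularity: dΓ_β^γ ≠ 0 implies |γ| < |β| + D/p̄. -/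
namespace DGAux
variable {d : ℕ}

def wt (γ : MIdx d) : ℕ := γ.sum fun _ m => m

lemma wt_add (a b : MIdx d) : wt (a + b) = wt a + wt b :=
  Finsupp.sum_add_index' (fun _ => rfl) (fun _ _ _ => rfl)

lemma wt_single (j : ℕ ⊕ PIdx d) : wt (Finsupp.single j 1) = 1 := by
  simp [wt, Finsupp.sum_single_index]

lemma wt_eq_zero {γ : MIdx d} (h : wt γ = 0) : γ = 0 := by
  ext j
  by_contra hj
  have hmem : j ∈ γ.support := Finsupp.mem_support_iff.2 (by simpa using hj)
  have := Finset.sum_eq_zero_iff.1 h j hmem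
  exact (Finsupp.mem_support_iff.1 hmem) this

lemma exists_decomp (γ : MIdx d) (hγ : γ ≠ 0) :
    ∃ j γ', γ = γ' + Finsupp.single j 1 ∧ wt γ' + 1 = wt γ := by
  obtain ⟨j, hj⟩ := Finsupp.support_nonempty_iff.2 hγ
  have hj' : γ j ≠ 0 := Finsupp.mem_support_iff.1 hj
  refine ⟨j, γ - Finsupp.single j 1, ?_, ?_⟩
  · ext a
    simp only [Finsupp.coe_add, Pi.add_apply, Finsupp.tsub_apply, Finsupp.single_apply]
    rcases eq_or_ne j a with rfl | h
    · rw [if_pos rfl]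
      have := Nat.pos_of_ne_zero hj'
      omega
    · simp [h]
  · have h2 : wt (γ - Finsupp.single j 1 + Finsupp.single j 1) =
        wt (γ - Finsupp.single j 1) + 1 := by rw [wt_add, wt_single]
    have h3 : γ - Finsupp.single j 1 + Finsupp.single j 1 = γ := by
      ext a
      simp only [Finsupp.coe_add, Pi.add_apply, Finsupp.tsub_apply, Finsupp.single_apply]
      rcases eq_or_ne j a with rfl | h
      · rw [if_pos rfl]
        have := Nat.pos_of_ne_zero hj'
        omega
      · simp [h]
    rw [← h2, h3]

lemma kSum_add (a b : MIdx d) : kSum (a + b) = kSum a + kSum b :=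
  Finsupp.sum_add_index' (fun j => by cases j <;> rfl) (fun j m₁ m₂ => by cases j <;> simp)

lemma nSum_add (a b : MIdx d) : nSum (a + b) = nSum a + nSum b :=
  Finsupp.sum_add_index' (fun j => by cases j <;> rfl) (fun j m₁ m₂ => by cases j <;> simp)

lemma npSum_add (a b : MIdx d) : npSum (a + b) = npSum a + npSum b :=
  Finsupp.sum_add_index' (fun j => by cases j <;> simp) (fun j m₁ m₂ => by cases j <;> simp [Nat.mul_add])

lemma homog_add (α : ℝ) (kb : ℕ) (a b : MIdx d) :
    homog α kb (a + b) = homog α kb a + homog α kb b - α := by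
  simp only [homog, kSum_add, nSum_add, npSum_add, Nat.cast_add]; ring

lemma kSum_single_inr (n : PIdx d) : kSum (Finsupp.single (Sum.inr n) 1) = 0 := by
  simp [kSum, Finsupp.sum_single_index]
lemma nSum_single_inr (n : PIdx d) : nSum (Finsupp.single (Sum.inr n) 1) = 1 := by
  simp [nSum, Finsupp.sum_single_index]
lemma npSum_single_inr (n : PIdx d) : npSum (Finsupp.single (Sum.inr n) 1) = pDeg n := by
  simp [npSum, Finsupp.sum_single_index]

lemma homog_single_inr (α : ℝ) (kb : ℕ) (n : PIdx d) :
    homog α kb (Finsupp.single (Sum.inr n) 1) = pDeg n := by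
  simp [homog, kSum_single_inr, nSum_single_inr, npSum_single_inr]

lemma homog_ge {α : ℝ} {kb : ℕ} (hα : α < 0) (ha : 0 < 2 + ((kb : ℝ) - 1) * α)
    (β : MIdx d) : α ≤ homog α kb β := by
  have h1 : (0:ℝ) ≤ (kSum β : ℝ) := Nat.cast_nonneg _
  have h2 : (0:ℝ) ≤ (nSum β : ℝ) := Nat.cast_nonneg _
  have h3 : (0:ℝ) ≤ (npSum β : ℝ) := Nat.cast_nonneg _
  unfold homog; nlinarith


lemma Gamma_tri {α : ℝ} {kb : ℕ} (hα : α < 0) (ha : 0 < 2 + ((kb : ℝ) - 1) * α)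
    (π : PIdx d → MIdx d → ℝ)
    (hπ : ∀ (n : PIdx d) (β : MIdx d), π n β ≠ 0 → (pDeg n : ℝ) < homog α kb β)
    (Γ : MIdx d → MIdx d → ℝ)
    (hΓk : ∀ (k : ℕ) (β : MIdx d),
      Γ β (Finsupp.single (Sum.inl k) 1) =
        if β = Finsupp.single (Sum.inl k) 1 then 1 else 0)
    (hΓn : ∀ (n : PIdx d) (β : MIdx d),
      Γ β (Finsupp.single (Sum.inr n) 1) =
        (if β = Finsupp.single (Sum.inr n) 1 then 1 else 0) + π n β)
    (hΓ1 : ∀ β : MIdx d, Γ β 0 = if β = 0 then 1 else 0)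
    (hΓmul : ∀ γ₁ γ₂ β : MIdx d,
      Γ β (γ₁ + γ₂) = ∑ p ∈ Finset.HasAntidiagonal.antidiagonal β, Γ p.1 γ₁ * Γ p.2 γ₂) :
    ∀ γ β : MIdx d, Γ β γ ≠ 0 → homog α kb γ ≤ homog α kb β := by
  suffices H : ∀ N (γ β : MIdx d), wt γ ≤ N → Γ β γ ≠ 0 → homog α kb γ ≤ homog α kb β from
    fun γ β h => H (wt γ) γ β le_rfl h
  intro N
  induction N with
  | zero =>
    intro γ β hw hne
    have hγ0 : γ = 0 := wt_eq_zero (Nat.le_zero.1 hw)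
    subst hγ0
    rw [hΓ1] at hne
    by_cases hb : β = 0
    · subst hb; exact le_rfl
    · simp [hb] at hne
  | succ N ih =>
    intro γ β hw hne
    rcases eq_or_ne γ 0 with rfl | hγ
    · rw [hΓ1] at hne
      by_cases hb : β = 0
      · subst hb; exact le_rfl
      · simp [hb] at hne
    · obtain ⟨j, γ', hsplit, hwt⟩ := exists_decomp γ hγ
      rw [hsplit, hΓmul] at hne
      obtain ⟨p, hp, hpne⟩ := Finset.exists_ne_zero_of_sum_ne_zero hne
      have hpsum : p.1 + p.2 = β := Finset.HasAntidiagonal.mem_antidiagonal.1 hp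
      have h1 : Γ p.1 γ' ≠ 0 := fun h => hpne (by simp [h])
      have h2 : Γ p.2 (Finsupp.single j 1) ≠ 0 := fun h => hpne (by simp [h])
      have hwt' : wt γ' ≤ N := by
        rw [hsplit, wt_add, wt_single] at hw; omega
      have ihh := ih γ' p.1 hwt' h1
      have hsle : homog α kb (Finsupp.single j 1) ≤ homog α kb p.2 := by
        cases j with
        | inl k =>
          rw [hΓk] at h2
          have hp2 : p.2 = Finsupp.single (Sum.inl k) 1 := by
            by_contra hc; simp [hc] at h2
          rw [hp2]
        | inr n =>
          rw [hΓn] at h2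
          by_cases hc : p.2 = Finsupp.single (Sum.inr n) 1
          · rw [hc]
          · have hπne : π n p.2 ≠ 0 := by simpa [hc] using h2
            have := hπ n p.2 hπne
            rw [homog_single_inr]
            linarith
      have e1 : homog α kb γ = homog α kb γ' + homog α kb (Finsupp.single j 1) - α := by
        rw [hsplit, homog_add]
      have e2 : homog α kb β = homog α kb p.1 + homog α kb p.2 - α := by
        rw [← hpsum, homog_add]
      linarith

lemma dGamma_tri {α pbar : ℝ} {kb : ℕ} (hα : α < 0) (ha : 0 < 2 + ((kb : ℝ) - 1) * α)
    (Γ : MIdx d → MIdx d → ℝ)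
    (hΓtri : ∀ γ β : MIdx d, Γ β γ ≠ 0 → homog α kb γ ≤ homog α kb β)
    (dπ : PIdx d → MIdx d → ℝ)
    (hdπ : ∀ (n : PIdx d) (β : MIdx d), dπ n β ≠ 0 →
      (pDeg n : ℝ) < α + ((d : ℝ) + 2) / pbar)
    (dΓ : MIdx d → MIdx d → ℝ)
    (hdΓk : ∀ (k : ℕ) (β : MIdx d), dΓ β (Finsupp.single (Sum.inl k) 1) = 0)
    (hdΓn : ∀ (n : PIdx d) (β : MIdx d),
      dΓ β (Finsupp.single (Sum.inr n) 1) = dπ n β)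
    (hdΓ1 : ∀ β : MIdx d, dΓ β 0 = 0)
    (hdΓmul : ∀ γ₁ γ₂ β : MIdx d,
      dΓ β (γ₁ + γ₂) = ∑ p ∈ Finset.HasAntidiagonal.antidiagonal β,
        (dΓ p.1 γ₁ * Γ p.2 γ₂ + Γ p.1 γ₁ * dΓ p.2 γ₂)) :
    ∀ γ β : MIdx d, dΓ β γ ≠ 0 →
      homog α kb γ < homog α kb β + ((d : ℝ) + 2) / pbar := by
  set c : ℝ := ((d : ℝ) + 2) / pbar with hc
  suffices H : ∀ N (γ β : MIdx d), wt γ ≤ N → dΓ β γ ≠ 0 →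
      homog α kb γ < homog α kb β + c from fun γ β h => H (wt γ) γ β le_rfl h
  intro N
  induction N with
  | zero =>
    intro γ β hw hne
    have hγ0 : γ = 0 := wt_eq_zero (Nat.le_zero.1 hw)
    subst hγ0
    exact absurd (hdΓ1 β) hne
  | succ N ih =>
    intro γ β hw hne
    rcases eq_or_ne γ 0 with rfl | hγ
    · exact absurd (hdΓ1 β) hne
    · obtain ⟨j, γ', hsplit, hwt⟩ := exists_decomp γ hγ
      rw [hsplit, hdΓmul] at hne
      obtain ⟨p, hp, hpne⟩ := Finset.exists_ne_zero_of_sum_ne_zero hne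
      have hpsum : p.1 + p.2 = β := Finset.HasAntidiagonal.mem_antidiagonal.1 hp
      have hwt' : wt γ' ≤ N := by
        rw [hsplit, wt_add, wt_single] at hw; omega
      have e1 : homog α kb γ = homog α kb γ' + homog α kb (Finsupp.single j 1) - α := by
        rw [hsplit, homog_add]
      have e2 : homog α kb β = homog α kb p.1 + homog α kb p.2 - α := by
        rw [← hpsum, homog_add]
      have hsplit2 : dΓ p.1 γ' * Γ p.2 (Finsupp.single j 1) ≠ 0 ∨
          Γ p.1 γ' * dΓ p.2 (Finsupp.single j 1) ≠ 0 := by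
        by_contra hcon
        push_neg at hcon
        exact hpne (by rw [hcon.1, hcon.2, add_zero])
      rcases hsplit2 with hA | hB
      · have ha1 : dΓ p.1 γ' ≠ 0 := left_ne_zero_of_mul hA
        have ha2 : Γ p.2 (Finsupp.single j 1) ≠ 0 := right_ne_zero_of_mul hA
        have ihA := ih γ' p.1 hwt' ha1
        have hs := hΓtri _ _ ha2
        linarith
      · have hb1 : Γ p.1 γ' ≠ 0 := left_ne_zero_of_mul hB
        have hb2 : dΓ p.2 (Finsupp.single j 1) ≠ 0 := right_ne_zero_of_mul hB
        have htri := hΓtri _ _ hb1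
        cases j with
        | inl k => rw [hdΓk] at hb2; exact absurd rfl hb2
        | inr n =>
          rw [hdΓn] at hb2
          have hdeg := hdπ n p.2 hb2
          have hge := homog_ge (d := d) hα ha p.2
          rw [homog_single_inr] at e1
          linarith

def toPS (Γ : MIdx d → MIdx d → ℝ) (γ : MIdx d) : MvPowerSeries (ℕ ⊕ PIdx d) ℝ :=
  fun β => Γ β γ
lemma coeff_toPS (Γ : MIdx d → MIdx d → ℝ) (γ β : MIdx d) :
    MvPowerSeries.coeff β (toPS Γ γ) = Γ β γ := rfl
lemma sub_single_add (γ' : MIdx d) (j i : ℕ ⊕ PIdx d) (h : γ' i ≠ 0) :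
    (γ' + Finsupp.single j 1) - Finsupp.single i 1
      = Finsupp.single j 1 + (γ' - Finsupp.single i 1) := by
  have hi := Nat.pos_of_ne_zero h
  ext a
  simp only [Finsupp.coe_add, Pi.add_apply, Finsupp.tsub_apply, Finsupp.single_apply]
  rcases eq_or_ne i a with rfl | hne
  · rw [if_pos rfl]
    split_ifs <;> omega
  · rw [if_neg hne]
    omega

lemma add_sub_single (γ' : MIdx d) (j : ℕ ⊕ PIdx d) :
    (γ' + Finsupp.single j 1) - Finsupp.single j 1 = γ' := by
  ext a
  simp only [Finsupp.coe_add, Pi.add_apply, Finsupp.tsub_apply, Finsupp.single_apply]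
  omega

def dPS (dπ : PIdx d → MIdx d → ℝ) (n : PIdx d) : MvPowerSeries (ℕ ⊕ PIdx d) ℝ := dπ n

lemma coeff_dPS (dπ : PIdx d → MIdx d → ℝ) (n : PIdx d) (β : MIdx d) :
    MvPowerSeries.coeff β (dPS dπ n) = dπ n β := rfl

lemma key_formula
    (Γ : MIdx d → MIdx d → ℝ)
    (hΓmul : ∀ γ₁ γ₂ β : MIdx d,
      Γ β (γ₁ + γ₂) = ∑ p ∈ Finset.HasAntidiagonal.antidiagonal β, Γ p.1 γ₁ * Γ p.2 γ₂)
    (dπ : PIdx d → MIdx d → ℝ)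
    (dΓ : MIdx d → MIdx d → ℝ)
    (hdΓk : ∀ (k : ℕ) (β : MIdx d), dΓ β (Finsupp.single (Sum.inl k) 1) = 0)
    (hdΓn : ∀ (n : PIdx d) (β : MIdx d),
      dΓ β (Finsupp.single (Sum.inr n) 1) = dπ n β)
    (hdΓ1 : ∀ β : MIdx d, dΓ β 0 = 0)
    (hdΓmul : ∀ γ₁ γ₂ β : MIdx d,
      dΓ β (γ₁ + γ₂) = ∑ p ∈ Finset.HasAntidiagonal.antidiagonal β,
        (dΓ p.1 γ₁ * Γ p.2 γ₂ + Γ p.1 γ₁ * dΓ p.2 γ₂)) :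
    ∀ N (γ : MIdx d), wt γ ≤ N → ∀ T : Finset (PIdx d),
      (∀ n, γ (Sum.inr n) ≠ 0 → n ∈ T) →
      toPS dΓ γ = ∑ n ∈ T, (γ (Sum.inr n) : ℝ) •
        (dPS dπ n * toPS Γ (γ - Finsupp.single (Sum.inr n) 1)) := by
  have hGmul : ∀ a b : MIdx d, toPS Γ (a + b) = toPS Γ a * toPS Γ b := by
    intro a b
    apply MvPowerSeries.ext; intro β
    rw [MvPowerSeries.coeff_mul, coeff_toPS]
    exact hΓmul a b β
  have hbase : toPS dΓ (0 : MIdx d) = 0 := by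
    apply MvPowerSeries.ext; intro β
    rw [coeff_toPS, map_zero]
    exact hdΓ1 β
  intro N
  induction N with
  | zero =>
    intro γ hw T hT
    have h0 : γ = 0 := wt_eq_zero (Nat.le_zero.1 hw)
    subst h0
    rw [hbase]
    symm
    exact Finset.sum_eq_zero fun n _ => by simp
  | succ N ih =>
    intro γ hw T hT
    rcases eq_or_ne γ 0 with rfl | hγ
    · rw [hbase]
      symm
      exact Finset.sum_eq_zero fun n _ => by simp
    obtain ⟨j, γ', hsplit, hwt⟩ := exists_decomp γ hγ
    have hwt' : wt γ' ≤ N := by rw [hsplit, wt_add, wt_single] at hw; omega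
    have hT' : ∀ n, γ' (Sum.inr n) ≠ 0 → n ∈ T := by
      intro n hn
      apply hT
      rw [hsplit, Finsupp.add_apply]
      omega
    have IH := ih γ' hwt' T hT'
    have hdGmul : toPS dΓ (γ' + Finsupp.single j 1)
        = toPS dΓ γ' * toPS Γ (Finsupp.single j 1)
          + toPS Γ γ' * toPS dΓ (Finsupp.single j 1) := by
      apply MvPowerSeries.ext; intro β
      rw [map_add, MvPowerSeries.coeff_mul, MvPowerSeries.coeff_mul,
        ← Finset.sum_add_distrib, coeff_toPS]
      exact hdΓmul γ' (Finsupp.single j 1) β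
    have hmain : toPS dΓ γ' * toPS Γ (Finsupp.single j 1)
        = ∑ n ∈ T, (γ' (Sum.inr n) : ℝ) •
            (dPS dπ n * toPS Γ (γ - Finsupp.single (Sum.inr n) 1)) := by
      rw [IH, Finset.sum_mul]
      refine Finset.sum_congr rfl fun n _ => ?_
      rcases eq_or_ne (γ' (Sum.inr n)) 0 with h0 | h0
      · simp [h0]
      · rw [smul_mul_assoc, mul_assoc, ← hGmul, hsplit,
          sub_single_add γ' j (Sum.inr n) h0,
          add_comm (γ' - Finsupp.single (Sum.inr n) 1) (Finsupp.single j 1)]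
    cases j with
    | inl k =>
      have hzero : toPS dΓ (Finsupp.single (Sum.inl k) 1) = 0 := by
        apply MvPowerSeries.ext; intro β
        rw [coeff_toPS, map_zero]
        exact hdΓk k β
      calc toPS dΓ γ
          = toPS dΓ γ' * toPS Γ (Finsupp.single (Sum.inl k) 1)
            + toPS Γ γ' * toPS dΓ (Finsupp.single (Sum.inl k) 1) := by
            rw [← hdGmul, ← hsplit]
        _ = ∑ n ∈ T, (γ' (Sum.inr n) : ℝ) •
              (dPS dπ n * toPS Γ (γ - Finsupp.single (Sum.inr n) 1)) := by
            rw [hzero, mul_zero, add_zero, hmain]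
        _ = ∑ n ∈ T, (γ (Sum.inr n) : ℝ) •
              (dPS dπ n * toPS Γ (γ - Finsupp.single (Sum.inr n) 1)) := by
            refine Finset.sum_congr rfl fun n _ => ?_
            congr 2
            rw [hsplit, Finsupp.add_apply, Finsupp.single_apply]
            simp
    | inr m =>
      have hdπs : toPS dΓ (Finsupp.single (Sum.inr m) 1) = dPS dπ m := by
        apply MvPowerSeries.ext; intro β
        rw [coeff_toPS, coeff_dPS]
        exact hdΓn m β
      have hcoef : ∀ n : PIdx d, (γ (Sum.inr n) : ℝ)
          = (γ' (Sum.inr n) : ℝ) + (if m = n then 1 else 0) := by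
        intro n
        rw [hsplit, Finsupp.add_apply, Finsupp.single_apply]
        by_cases h : m = n
        · subst h; simp
        · have : Sum.inr (α := ℕ) m ≠ Sum.inr n := fun hc => h (Sum.inr.inj hc)
          simp [h, this]
      have hmem : m ∈ T := by
        apply hT
        rw [hsplit, Finsupp.add_apply, Finsupp.single_apply]
        simp
      have hgm : γ - Finsupp.single (Sum.inr m) 1 = γ' := by
        rw [hsplit]; exact add_sub_single γ' (Sum.inr m)
      calc toPS dΓ γ
          = toPS dΓ γ' * toPS Γ (Finsupp.single (Sum.inr m) 1)
            + toPS Γ γ' * toPS dΓ (Finsupp.single (Sum.inr m) 1) := by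
            rw [← hdGmul, ← hsplit]
        _ = (∑ n ∈ T, (γ' (Sum.inr n) : ℝ) •
              (dPS dπ n * toPS Γ (γ - Finsupp.single (Sum.inr n) 1)))
            + dPS dπ m * toPS Γ (γ - Finsupp.single (Sum.inr m) 1) := by
            rw [hmain, hdπs, hgm, mul_comm]
        _ = ∑ n ∈ T, (γ (Sum.inr n) : ℝ) •
              (dPS dπ n * toPS Γ (γ - Finsupp.single (Sum.inr n) 1)) := by
            simp only [hcoef, add_smul, ite_smul, one_smul, zero_smul,
              Finset.sum_add_distrib, Finset.sum_ite_eq, hmem, if_pos]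
end DGAux

/-- the derivation-like map `dΓ` on `ℝ[[z_k, z_n]]` (determined by
`dΓ z_k = 0`, `dΓ z_n = dπ^{(n)}`, `dΓ 1 = 0` and the Leibniz rule
`dΓ(π₁π₂) = (dΓπ₁)(Γπ₂) + (Γπ₁)(dΓπ₂)`), with `dπ^{(n)}_β ≠ 0 ⟹ |n| < α + D/p̄`,
satisfies the closed formula `dΓ z^γ = Σ_n dπ^{(n)} · Γ(D^n z^γ)` and the
triangularity `dΓ_β^γ ≠ 0 ⟹ |γ| < |β| + D/p̄`. -/
theorem dGamma_formula_triangular {d : ℕ} (α pbar : ℝ) (kb : ℕ) (hkb : 3 ≤ kb)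
    (hα : α < 0) (ha : 0 < 2 + ((kb : ℝ) - 1) * α) (hpbar : 2 ≤ pbar)
    (π : PIdx d → MIdx d → ℝ)
    (hπ : ∀ (n : PIdx d) (β : MIdx d), π n β ≠ 0 → (pDeg n : ℝ) < homog α kb β)
    (Γ : MIdx d → MIdx d → ℝ)
    (hΓk : ∀ (k : ℕ) (β : MIdx d),
      Γ β (Finsupp.single (Sum.inl k) 1) =
        if β = Finsupp.single (Sum.inl k) 1 then 1 else 0)
    (hΓn : ∀ (n : PIdx d) (β : MIdx d),
      Γ β (Finsupp.single (Sum.inr n) 1) =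
        (if β = Finsupp.single (Sum.inr n) 1 then 1 else 0) + π n β)
    (hΓ1 : ∀ β : MIdx d, Γ β 0 = if β = 0 then 1 else 0)
    (hΓmul : ∀ γ₁ γ₂ β : MIdx d,
      Γ β (γ₁ + γ₂) = ∑ p ∈ Finset.HasAntidiagonal.antidiagonal β, Γ p.1 γ₁ * Γ p.2 γ₂)
    (dπ : PIdx d → MIdx d → ℝ)
    (hdπ : ∀ (n : PIdx d) (β : MIdx d), dπ n β ≠ 0 →
      (pDeg n : ℝ) < α + ((d : ℝ) + 2) / pbar)
    (dΓ : MIdx d → MIdx d → ℝ)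
    (hdΓk : ∀ (k : ℕ) (β : MIdx d), dΓ β (Finsupp.single (Sum.inl k) 1) = 0)
    (hdΓn : ∀ (n : PIdx d) (β : MIdx d),
      dΓ β (Finsupp.single (Sum.inr n) 1) = dπ n β)
    (hdΓ1 : ∀ β : MIdx d, dΓ β 0 = 0)
    (hdΓmul : ∀ γ₁ γ₂ β : MIdx d,
      dΓ β (γ₁ + γ₂) = ∑ p ∈ Finset.HasAntidiagonal.antidiagonal β,
        (dΓ p.1 γ₁ * Γ p.2 γ₂ + Γ p.1 γ₁ * dΓ p.2 γ₂)) :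
    (∀ β γ : MIdx d,
      dΓ β γ = ∑' n : PIdx d, ∑ p ∈ Finset.HasAntidiagonal.antidiagonal β,
        dπ n p.1 * ((γ (Sum.inr n) : ℝ) *
          Γ p.2 (γ - Finsupp.single (Sum.inr n) 1))) ∧
    (∀ β γ : MIdx d, dΓ β γ ≠ 0 →
      homog α kb γ < homog α kb β + ((d : ℝ) + 2) / pbar) := by
  constructor
  · intro β γ
    classical
    set T : Finset (PIdx d) := γ.support.image (Sum.elim (fun _ => (0 : PIdx d)) id)
      with hTdef
    have hT : ∀ n : PIdx d, γ (Sum.inr n) ≠ 0 → n ∈ T := fun n hn =>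
      Finset.mem_image.2 ⟨Sum.inr n, Finsupp.mem_support_iff.2 hn, rfl⟩
    have hkey := DGAux.key_formula Γ hΓmul dπ dΓ hdΓk hdΓn hdΓ1 hdΓmul
      (DGAux.wt γ) γ le_rfl T hT
    have hvan : ∀ n ∉ T, (∑ p ∈ Finset.HasAntidiagonal.antidiagonal β,
        dπ n p.1 * ((γ (Sum.inr n) : ℝ) *
          Γ p.2 (γ - Finsupp.single (Sum.inr n) 1))) = 0 := by
      intro n hn
      have h0 : γ (Sum.inr n) = 0 := by
        by_contra hc; exact hn (hT n hc)
      exact Finset.sum_eq_zero fun p _ => by rw [h0]; simp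
    rw [tsum_eq_sum hvan]
    have hrfl : dΓ β γ = MvPowerSeries.coeff β (DGAux.toPS dΓ γ) := rfl
    rw [hrfl, hkey, map_sum]
    refine Finset.sum_congr rfl fun n _ => ?_
    rw [map_smul, smul_eq_mul, MvPowerSeries.coeff_mul, Finset.mul_sum]
    refine Finset.sum_congr rfl fun p _ => ?_
    have e1 : MvPowerSeries.coeff p.1 (DGAux.dPS dπ n) = dπ n p.1 := rfl
    have e2 : MvPowerSeries.coeff p.2
        (DGAux.toPS Γ (γ - Finsupp.single (Sum.inr n) 1))
        = Γ p.2 (γ - Finsupp.single (Sum.inr n) 1) := rfl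
    rw [e1, e2]; ring
  · have hΓtri := DGAux.Gamma_tri hα ha π hπ Γ hΓk hΓn hΓ1 hΓmul
    exact fun β γ h =>
      DGAux.dGamma_tri hα ha Γ hΓtri dπ hdπ dΓ hdΓk hdΓn hdΓ1 hdΓmul γ β h
end
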